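/- Let G be a finite abelian group of size 2^{2n} (n >= 2) and C_0 ⊆ G with |G \ C_0| <= 2^{2n}/n. There is an absolute constant k such that for t >= k log n, if C_{i+1} = C_i ∪ (C_i + u_{i+1}) with u_1, ..., u_t independent uniform in G, then P(C_t ≠ G) <= 1/n^2. -/

import Mathlib

set_option linter.unusedSectionVars false
set_option maxHeartbeats 1000000

open Classical

/-- The covered sets of the iterated random-translate process:
`C_{i+1} = C_i ∪ (C_i + u_{i+1})`. -/
def iterCover {G : Type*} [AddCommGroup G] [DecidableEq G]
    (C₀ : Finset G) (u : ℕ → G) : ℕ → Finset G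
  | 0 => C₀
  | i + 1 => iterCover C₀ u i ∪ (iterCover C₀ u i).image (fun c => c + u (i + 1))

section Aux

variable {G : Type} [AddCommGroup G] [Fintype G] [DecidableEq G]

/-- one step of the uncovered-set process -/
def uncov (U : Finset G) (v : G) : Finset G := U.filter (fun g => g - v ∈ U)

lemma uncov_subset (U : Finset G) (v : G) : uncov U v ⊆ U := Finset.filter_subset _ _

/-- a good step squares down the uncovered set -/
def goodStep (c : ℝ) (U : Finset G) (v : G) : Prop :=
  (Fintype.card G : ℝ) * ((uncov U v).card : ℝ) ≤ c * ((U.card : ℝ)) ^ 2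

/-- the uncovered set after applying all steps in order `u 0, u 1, ...` -/
def finalU : ∀ {t : ℕ}, Finset G → (Fin t → G) → Finset G
  | 0, U, _ => U
  | _ + 1, U, u => finalU (uncov U (u 0)) (Fin.tail u)

/-- the number of good steps along the process -/
noncomputable def goodCount (c : ℝ) : ∀ {t : ℕ}, Finset G → (Fin t → G) → ℕ
  | 0, _, _ => 0
  | _ + 1, U, u =>
      (if goodStep c U (u 0) then 1 else 0) + goodCount c (uncov U (u 0)) (Fin.tail u)

lemma finalU_succ {t : ℕ} (U : Finset G) (u : Fin (t + 1) → G) :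
    finalU U u = finalU (uncov U (u 0)) (Fin.tail u) := rfl

lemma goodCount_succ (c : ℝ) {t : ℕ} (U : Finset G) (u : Fin (t + 1) → G) :
    goodCount c U u =
      (if goodStep c U (u 0) then 1 else 0) + goodCount c (uncov U (u 0)) (Fin.tail u) := rfl

lemma tail_snoc {α : Type*} {t : ℕ} (u : Fin (t + 1) → α) (v : α) :
    @Fin.tail (t + 1) (fun _ => α) (@Fin.snoc (t + 1) (fun _ => α) u v)
      = @Fin.snoc t (fun _ => α) (@Fin.tail t (fun _ => α) u) v := by
  funext i
  cases i using Fin.lastCases with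
  | last =>
      have h1 : @Fin.tail (t + 1) (fun _ => α) (@Fin.snoc (t + 1) (fun _ => α) u v) (Fin.last t)
          = @Fin.snoc (t + 1) (fun _ => α) u v ((Fin.last t).succ) := rfl
      rw [h1, Fin.succ_last, Fin.snoc_last, Fin.snoc_last]
  | cast j =>
      have h1 : @Fin.tail (t + 1) (fun _ => α) (@Fin.snoc (t + 1) (fun _ => α) u v) (j.castSucc)
          = @Fin.snoc (t + 1) (fun _ => α) u v (j.castSucc.succ) := rfl
      rw [h1, Fin.succ_castSucc, Fin.snoc_castSucc, Fin.snoc_castSucc]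
      rfl

lemma finalU_snoc : ∀ {t : ℕ} (U : Finset G) (u : Fin t → G) (v : G),
    finalU U (Fin.snoc u v) = uncov (finalU U u) v := by
  intro t
  induction t with
  | zero =>
      intro U u v
      show finalU (uncov U ((Fin.snoc u v : Fin 1 → G) 0)) _ = uncov U v
      rw [Fin.snoc_zero]
      rfl
  | succ t ih =>
      intro U u v
      have h0 : (Fin.snoc u v : Fin (t+2) → G) 0 = u 0 := by
        have h : (0 : Fin (t+2)) = (0 : Fin (t+1)).castSucc := rfl
        rw [h, Fin.snoc_castSucc]
      calc finalU U (Fin.snoc u v)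
          = finalU (uncov U ((Fin.snoc u v : Fin (t+2) → G) 0))
              (@Fin.tail (t + 1) (fun _ => G) (@Fin.snoc (t + 1) (fun _ => G) u v)) := rfl
        _ = finalU (uncov U (u 0))
              (@Fin.snoc t (fun _ => G) (@Fin.tail t (fun _ => G) u) v) := by
            rw [h0, tail_snoc]
        _ = uncov (finalU (uncov U (u 0)) (Fin.tail u)) v := ih _ _ _
        _ = uncov (finalU U u) v := rfl

lemma compl_union_image (C : Finset G) (v : G) :
    Finset.univ \ (C ∪ C.image (fun c => c + v)) = uncov (Finset.univ \ C) v := by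
  ext g
  simp only [uncov, Finset.mem_sdiff, Finset.mem_union, Finset.mem_filter, Finset.mem_image,
    Finset.mem_univ, true_and]
  constructor
  · rintro h
    push_neg at h
    exact ⟨h.1, fun hm => h.2 (g - v) hm (by abel)⟩
  · rintro ⟨h1, h2⟩
    push_neg
    refine ⟨h1, fun x hx hxv => ?_⟩
    have : x = g - v := by rw [← hxv]; abel
    exact h2 (this ▸ hx)

lemma compl_iterCover (C : Finset G) (w : ℕ → G) :
    ∀ t : ℕ, Finset.univ \ iterCover C w t = finalU (Finset.univ \ C) (fun i : Fin t => w (i + 1)) := by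
  intro t
  induction t with
  | zero => rfl
  | succ t ih =>
      have : iterCover C w (t + 1) = iterCover C w t ∪ (iterCover C w t).image (fun c => c + w (t + 1)) := rfl
      rw [this, compl_union_image, ih, ← finalU_snoc]
      congr 1
      funext i
      cases i using Fin.lastCases with
      | last => rw [Fin.snoc_last]; simp
      | cast j => rw [Fin.snoc_castSucc]; simp

lemma sum_card_uncov (U : Finset G) :
    ∑ v : G, ((uncov U v).card : ℝ) = ((U.card : ℝ)) ^ 2 := by
  have key : ∀ g : G, (Finset.univ.filter (fun v : G => g - v ∈ U)).card = U.card := by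
    intro g
    apply Finset.card_bij' (fun v _ => g - v) (fun x _ => g - x)
    · intro v hv; simpa using (Finset.mem_filter.mp hv).2
    · intro x hx; simp only [Finset.mem_filter, Finset.mem_univ, true_and]
      simpa [sub_sub_cancel] using hx
    · intro v _; abel
    · intro x _; abel
  have : ∑ v : G, ((uncov U v).card : ℕ) = U.card ^ 2 := by
    simp only [uncov, Finset.card_filter]
    rw [Finset.sum_comm]
    simp only [← Finset.card_filter]
    simp [key, sq]
  calc ∑ v : G, ((uncov U v).card : ℝ) = ((∑ v : G, (uncov U v).card : ℕ) : ℝ) := by push_cast; ring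
    _ = ((U.card : ℝ)) ^ 2 := by rw [this]; push_cast; ring

lemma markov (c : ℝ) (hc : 0 < c) (U : Finset G) :
    ((Finset.univ.filter (fun v : G => ¬ goodStep c U v)).card : ℝ) ≤ (Fintype.card G : ℝ) / c := by
  by_cases hU : U.card = 0
  · have : ∀ v : G, goodStep c U v := by
      intro v
      have h1 : (uncov U v).card = 0 := by
        have := Finset.card_le_card (uncov_subset U v)
        omega
      unfold goodStep
      rw [h1, hU]
      simp
    rw [Finset.filter_false_of_mem (fun v _ => not_not_intro (this v))]
    simp only [Finset.card_empty, Nat.cast_zero]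
    positivity
  · have hU2 : (0 : ℝ) < ((U.card : ℝ)) ^ 2 := by
      have : 0 < U.card := Nat.pos_of_ne_zero hU
      positivity
    set B := Finset.univ.filter (fun v : G => ¬ goodStep c U v) with hB
    have h1 : (B.card : ℝ) * (c * ((U.card : ℝ)) ^ 2) ≤ (Fintype.card G : ℝ) * ((U.card : ℝ)) ^ 2 := by
      calc (B.card : ℝ) * (c * ((U.card : ℝ)) ^ 2)
          = ∑ _v ∈ B, c * ((U.card : ℝ)) ^ 2 := by rw [Finset.sum_const, nsmul_eq_mul]
        _ ≤ ∑ v ∈ B, (Fintype.card G : ℝ) * ((uncov U v).card : ℝ) := by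
            apply Finset.sum_le_sum
            intro v hv
            have := (Finset.mem_filter.mp hv).2
            unfold goodStep at this
            push_neg at this
            exact this.le
        _ ≤ ∑ v : G, (Fintype.card G : ℝ) * ((uncov U v).card : ℝ) := by
            apply Finset.sum_le_sum_of_subset_of_nonneg (Finset.subset_univ B)
            intro v _ _; positivity
        _ = (Fintype.card G : ℝ) * ((U.card : ℝ)) ^ 2 := by
            rw [← Finset.mul_sum, sum_card_uncov]
    rw [le_div_iff₀ hc]
    nlinarith

lemma progress (c : ℝ) (hc : 0 < c) :
    ∀ {t : ℕ} (u : Fin t → G) (U : Finset G) (e₀ : ℝ), 0 ≤ e₀ → e₀ ≤ 1 →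
      c * (U.card : ℝ) ≤ (Fintype.card G : ℝ) * e₀ →
      c * ((finalU U u).card : ℝ) ≤ (Fintype.card G : ℝ) * e₀ ^ (2 ^ goodCount c U u) := by
  intro t
  induction t with
  | zero => intro u U e₀ _ _ hU; simpa [finalU, goodCount] using hU
  | succ t ih =>
      intro u U e₀ h0 h1 hU
      have hG : (0 : ℝ) < (Fintype.card G : ℝ) := by
        exact_mod_cast Fintype.card_pos
      rw [finalU_succ, goodCount_succ]
      by_cases hg : goodStep c U (u 0)
      · rw [if_pos hg]
        have hstep : c * ((uncov U (u 0)).card : ℝ) ≤ (Fintype.card G : ℝ) * e₀ ^ 2 := by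
          unfold goodStep at hg
          have hUc : (0 : ℝ) ≤ (U.card : ℝ) := Nat.cast_nonneg _
          have h2 : (c * (U.card : ℝ)) * (c * (U.card : ℝ))
              ≤ ((Fintype.card G : ℝ) * e₀) * ((Fintype.card G : ℝ) * e₀) :=
            mul_le_mul hU hU (by positivity) (by positivity)
          have h3 : (Fintype.card G : ℝ) * (c * ((uncov U (u 0)).card : ℝ))
              ≤ (Fintype.card G : ℝ) * ((Fintype.card G : ℝ) * e₀ ^ 2) := by
            nlinarith [mul_le_mul_of_nonneg_left hg hc.le]
          exact le_of_mul_le_mul_left h3 hG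
        have := ih (Fin.tail u) (uncov U (u 0)) (e₀ ^ 2) (by positivity) (pow_le_one₀ h0 h1) hstep
        calc c * ((finalU (uncov U (u 0)) (Fin.tail u)).card : ℝ)
            ≤ (Fintype.card G : ℝ) * (e₀ ^ 2) ^ (2 ^ goodCount c (uncov U (u 0)) (Fin.tail u)) := this
          _ = (Fintype.card G : ℝ) * e₀ ^ (2 ^ (1 + goodCount c (uncov U (u 0)) (Fin.tail u))) := by
              rw [← pow_mul, pow_add, pow_one]
      · rw [if_neg hg, zero_add]
        apply ih
        · exact h0
        · exact h1
        · calc c * ((uncov U (u 0)).card : ℝ) ≤ c * (U.card : ℝ) := by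
                apply mul_le_mul_of_nonneg_left _ hc.le
                exact_mod_cast Finset.card_le_card (uncov_subset U (u 0))
            _ ≤ (Fintype.card G : ℝ) * e₀ := hU

lemma card_filter_succ (c : ℝ) {t : ℕ} (U : Finset G) (s : ℕ) :
    ((Finset.univ.filter (fun u : Fin (t + 1) → G => goodCount c U u < s)).card : ℝ) =
      ∑ v : G, ((Finset.univ.filter
        (fun w : Fin t → G => goodCount c U (Fin.cons v w) < s)).card : ℝ) := by
  set P : (Fin (t + 1) → G) → Prop := fun u => goodCount c U u < s with hP
  have h1 : (Finset.univ.filter P).card = ∑ u : Fin (t + 1) → G, if P u then 1 else 0 :=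
    Finset.card_filter P _
  have h2 : ∑ u : Fin (t + 1) → G, (if P u then (1:ℕ) else 0)
      = ∑ p : G × (Fin t → G), (if P (Fin.consEquiv (fun _ => G) p) then 1 else 0) :=
    (Equiv.sum_comp (Fin.consEquiv (fun _ => G)) _).symm
  rw [h1, h2, Fintype.sum_prod_type]
  push_cast
  refine Finset.sum_congr rfl (fun v _ => ?_)
  rw [Finset.card_filter]
  push_cast
  refine Finset.sum_congr rfl (fun w _ => ?_)
  rfl

lemma counting (c : ℝ) (hc : 0 < c) :
    ∀ (t : ℕ) (U : Finset G) (s : ℕ),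
      ((Finset.univ.filter (fun u : Fin t → G => goodCount c U u < s)).card : ℝ) ≤
        4 ^ s * ((1 / c + 1 / 4) * (Fintype.card G : ℝ)) ^ t := by
  intro t
  induction t with
  | zero =>
      intro U s
      have : ((Finset.univ.filter (fun u : Fin 0 → G => goodCount c U u < s)).card : ℝ) ≤ 1 := by
        have h2 := Finset.card_filter_le (Finset.univ : Finset (Fin 0 → G))
          (fun u => goodCount c U u < s)
        have h1 : (Finset.univ : Finset (Fin 0 → G)).card = 1 := by
          rw [Finset.card_univ]; simp
        rw [h1] at h2
        exact_mod_cast h2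
      calc ((Finset.univ.filter (fun u : Fin 0 → G => goodCount c U u < s)).card : ℝ)
          ≤ 1 := this
        _ ≤ 4 ^ s * 1 := by
            rw [mul_one]
            exact one_le_pow₀ (by norm_num : (1:ℝ) ≤ 4)
        _ = 4 ^ s * ((1 / c + 1 / 4) * (Fintype.card G : ℝ)) ^ 0 := by norm_num
  | succ t ih =>
      intro U s
      set D : ℝ := (1 / c + 1 / 4) * (Fintype.card G : ℝ) with hD
      have hDnn : 0 ≤ D := by positivity
      have hDt : (0:ℝ) ≤ D ^ t := by positivity
      rw [card_filter_succ c U s]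
      cases s with
      | zero =>
          have : ∀ v : G,
              ((Finset.univ.filter (fun w : Fin t → G => goodCount c U (Fin.cons v w) < 0)).card : ℝ) = 0 := by
            intro v
            simp
          rw [Finset.sum_congr rfl (fun v _ => this v)]
          simp only [Finset.sum_const, smul_zero]
          positivity
      | succ s' =>
          have hsimp : ∀ (v : G) (w : Fin t → G),
              goodCount c U (Fin.cons v w) =
                (if goodStep c U v then 1 else 0) + goodCount c (uncov U v) w := by
            intro v w
            rw [goodCount_succ]
            simp [Fin.cons_zero, Fin.tail_cons]
          have hgoodv : ∀ v : G, goodStep c U v →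
              ((Finset.univ.filter (fun w : Fin t → G => goodCount c U (Fin.cons v w) < s' + 1)).card : ℝ)
                ≤ 4 ^ s' * D ^ t := by
            intro v hv
            have : (Finset.univ.filter (fun w : Fin t → G => goodCount c U (Fin.cons v w) < s' + 1)) =
                (Finset.univ.filter (fun w : Fin t → G => goodCount c (uncov U v) w < s')) := by
              apply Finset.filter_congr
              intro w _
              rw [hsimp v w, if_pos hv]
              omega
            rw [this]
            exact ih (uncov U v) s'
          have hbadv : ∀ v : G,
              ((Finset.univ.filter (fun w : Fin t → G => goodCount c U (Fin.cons v w) < s' + 1)).card : ℝ)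
                ≤ 4 ^ (s' + 1) * D ^ t := by
            intro v
            have : (Finset.univ.filter (fun w : Fin t → G => goodCount c U (Fin.cons v w) < s' + 1)).card
                ≤ (Finset.univ.filter (fun w : Fin t → G => goodCount c (uncov U v) w < s' + 1)).card := by
              apply Finset.card_le_card
              intro w hw
              simp only [Finset.mem_filter, Finset.mem_univ, true_and] at hw ⊢
              rw [hsimp v w] at hw
              omega
            calc ((Finset.univ.filter (fun w : Fin t → G => goodCount c U (Fin.cons v w) < s' + 1)).card : ℝ)
                ≤ ((Finset.univ.filter (fun w : Fin t → G => goodCount c (uncov U v) w < s' + 1)).card : ℝ) := by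
                  exact_mod_cast this
              _ ≤ 4 ^ (s' + 1) * D ^ t := ih (uncov U v) (s' + 1)
          -- split the sum over good and bad v
          rw [← Finset.sum_filter_add_sum_filter_not Finset.univ (fun v : G => goodStep c U v)]
          have hgoodsum : ∑ v ∈ Finset.univ.filter (fun v : G => goodStep c U v),
              ((Finset.univ.filter (fun w : Fin t → G => goodCount c U (Fin.cons v w) < s' + 1)).card : ℝ)
              ≤ (Fintype.card G : ℝ) * (4 ^ s' * D ^ t) := by
            calc ∑ v ∈ Finset.univ.filter (fun v : G => goodStep c U v),
                ((Finset.univ.filter (fun w : Fin t → G => goodCount c U (Fin.cons v w) < s' + 1)).card : ℝ)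
                ≤ ∑ _v ∈ Finset.univ.filter (fun v : G => goodStep c U v), 4 ^ s' * D ^ t := by
                  apply Finset.sum_le_sum
                  intro v hv
                  exact hgoodv v (Finset.mem_filter.mp hv).2
              _ = ((Finset.univ.filter (fun v : G => goodStep c U v)).card : ℝ) * (4 ^ s' * D ^ t) := by
                  rw [Finset.sum_const, nsmul_eq_mul]
              _ ≤ (Fintype.card G : ℝ) * (4 ^ s' * D ^ t) := by
                  apply mul_le_mul_of_nonneg_right _ (by positivity)
                  exact_mod_cast Finset.card_filter_le _ _
          have hbadsum : ∑ v ∈ Finset.univ.filter (fun v : G => ¬ goodStep c U v),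
              ((Finset.univ.filter (fun w : Fin t → G => goodCount c U (Fin.cons v w) < s' + 1)).card : ℝ)
              ≤ ((Fintype.card G : ℝ) / c) * (4 ^ (s' + 1) * D ^ t) := by
            calc ∑ v ∈ Finset.univ.filter (fun v : G => ¬ goodStep c U v),
                ((Finset.univ.filter (fun w : Fin t → G => goodCount c U (Fin.cons v w) < s' + 1)).card : ℝ)
                ≤ ∑ _v ∈ Finset.univ.filter (fun v : G => ¬ goodStep c U v), 4 ^ (s' + 1) * D ^ t := by
                  apply Finset.sum_le_sum
                  intro v _
                  exact hbadv v
              _ = ((Finset.univ.filter (fun v : G => ¬ goodStep c U v)).card : ℝ) * (4 ^ (s' + 1) * D ^ t) := by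
                  rw [Finset.sum_const, nsmul_eq_mul]
              _ ≤ ((Fintype.card G : ℝ) / c) * (4 ^ (s' + 1) * D ^ t) := by
                  apply mul_le_mul_of_nonneg_right (markov c hc U) (by positivity)
          have hGnn : (0:ℝ) ≤ (Fintype.card G : ℝ) := Nat.cast_nonneg _
          calc _ ≤ (Fintype.card G : ℝ) * (4 ^ s' * D ^ t) + ((Fintype.card G : ℝ) / c) * (4 ^ (s' + 1) * D ^ t) :=
                add_le_add hgoodsum hbadsum
            _ = 4 ^ (s' + 1) * D ^ t * ((1 / c + 1 / 4) * (Fintype.card G : ℝ)) := by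
                field_simp
                ring
            _ = 4 ^ (s' + 1) * D ^ (t + 1) := by rw [hD]; ring

end Aux

/-- There is an absolute constant `k` such that: for every finite abelian
group `G` of size `2^{2n}` (`n ≥ 2`) and every `C₀ ⊆ G` leaving at most
`2^{2n}/n` points uncovered, if `t ≥ k log n` and `u₁, ..., u_t` are
independent uniform elements of `G`, then with probability all but `1/n²`
the `t`-fold translate process covers all of `G`. -/
theorem stmt_15 :
    ∃ k : ℝ, 0 < k ∧
      ∀ (n : ℕ), 2 ≤ n →
        ∀ (G : Type) [AddCommGroup G] [Fintype G] [DecidableEq G],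
          Fintype.card G = 2 ^ (2 * n) →
            ∀ C₀ : Finset G,
              ((Finset.univ \ C₀).card : ℝ) ≤ (2 ^ (2 * n) : ℝ) / (n : ℝ) →
                ∀ t : ℕ, k * Real.log n ≤ (t : ℝ) →
                  ((Finset.univ.filter (fun u : Fin t → G =>
                      iterCover C₀
                        (fun i => if h : i - 1 < t then u ⟨i - 1, h⟩ else 0) t ≠
                        Finset.univ)).card : ℝ) /
                      (Fintype.card (Fin t → G) : ℝ) ≤
                    1 / (n : ℝ) ^ 2 := by
  refine ⟨1000, by norm_num, ?_⟩
  intro n hn G _ _ _ hcard C₀ hC₀ t ht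
  have hn2 : (2:ℝ) ≤ (n:ℝ) := by exact_mod_cast hn
  have hn0 : (0:ℝ) < (n:ℝ) := by linarith
  have hn1 : (1:ℝ) ≤ (n:ℝ) := by linarith
  set c : ℝ := Real.sqrt n with hcdef
  have hc : 0 < c := Real.sqrt_pos.mpr hn0
  have hcc : c * c = (n:ℝ) := Real.mul_self_sqrt hn0.le
  have hc1 : 1 < c := by nlinarith
  have hG : (Fintype.card G : ℝ) = 2 ^ (2 * n) := by exact_mod_cast hcard
  have hGpos : (0:ℝ) < (Fintype.card G : ℝ) := by
    rw [hG]; positivity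
  set U₀ : Finset G := Finset.univ \ C₀ with hU₀def
  -- initial density bound
  have he : c * ((U₀.card : ℕ) : ℝ) ≤ (Fintype.card G : ℝ) * (1/c) := by
    calc c * ((U₀.card : ℕ) : ℝ) ≤ c * ((2 ^ (2 * n) : ℝ) / (n : ℝ)) :=
          mul_le_mul_of_nonneg_left hC₀ hc.le
      _ = (Fintype.card G : ℝ) * (1/c) := by
          rw [hG, ← hcc]
          field_simp
  set L : ℕ := Nat.log 2 n with hLdef
  set s : ℕ := L + 3 with hsdef
  have he1 : (1/c : ℝ) ≤ 1 := by
    rw [div_le_one hc]; exact hc1.le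
  have he0 : (0:ℝ) ≤ 1/c := by positivity
  -- key numeric fact : enough good steps kill the uncovered set
  have hL2 : 2 * n ≤ 2 ^ (L + 2) := by
    have h1 : n < 2 ^ (L + 1) := Nat.lt_pow_succ_log_self (by norm_num) n
    have h2 : 2 ^ (L + 2) = 2 ^ (L + 1) * 2 := pow_succ 2 (L + 1)
    omega
  have hinvsq : (1/c : ℝ) ^ 2 = 1/(n:ℝ) := by
    rw [div_pow, one_pow, sq, hcc]
  have key1 : (Fintype.card G : ℝ) * (1/c) ^ (2 ^ s) ≤ 1 := by
    have hexp : 2 ^ s = 2 * 2 ^ (L + 2) := by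
      rw [hsdef, pow_succ, mul_comm]
    calc (Fintype.card G : ℝ) * (1/c) ^ (2 ^ s)
        = 2 ^ (2 * n) * ((1/c) ^ 2) ^ (2 ^ (L + 2)) := by
          rw [hG, hexp]
          congr 1
          exact pow_mul (1/c) 2 (2 ^ (L + 2))
      _ = 2 ^ (2 * n) * (1/(n:ℝ)) ^ (2 ^ (L + 2)) := by rw [hinvsq]
      _ ≤ 2 ^ (2 * n) * (1/(n:ℝ)) ^ (2 * n) := by
          apply mul_le_mul_of_nonneg_left _ (by positivity)
          apply pow_le_pow_of_le_one (by positivity) _ hL2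
          rw [div_le_one hn0]; exact hn1
      _ = (2 * (1/(n:ℝ))) ^ (2 * n) := by rw [mul_pow]
      _ ≤ 1 := by
          apply pow_le_one₀ (by positivity)
          rw [mul_one_div, div_le_one hn0]
          exact hn2
  have hcover : ∀ u : Fin t → G, ¬ (goodCount c U₀ u < s) → finalU U₀ u = ∅ := by
    intro u hu
    push_neg at hu
    have hp := progress c hc u U₀ (1/c) he0 he1 he
    have hmono : (1/c:ℝ) ^ (2 ^ goodCount c U₀ u) ≤ (1/c) ^ (2 ^ s) :=
      pow_le_pow_of_le_one he0 he1 (Nat.pow_le_pow_right (by norm_num) hu)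
    have hle1 : c * ((finalU U₀ u).card : ℝ) ≤ 1 := by
      calc c * ((finalU U₀ u).card : ℝ)
          ≤ (Fintype.card G : ℝ) * (1/c) ^ (2 ^ goodCount c U₀ u) := hp
        _ ≤ (Fintype.card G : ℝ) * (1/c) ^ (2 ^ s) :=
            mul_le_mul_of_nonneg_left hmono hGpos.le
        _ ≤ 1 := key1
    have hxnn : (0:ℝ) ≤ ((finalU U₀ u).card : ℝ) := Nat.cast_nonneg _
    have hlt : ((finalU U₀ u).card : ℝ) < 1 := by nlinarith
    have : (finalU U₀ u).card = 0 := by exact_mod_cast Nat.lt_one_iff.mp (by exact_mod_cast hlt)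
    exact Finset.card_eq_zero.mp this
  -- relate iterCover to finalU
  have hiter : ∀ u : Fin t → G,
      Finset.univ \ iterCover C₀ (fun i => if h : i - 1 < t then u ⟨i - 1, h⟩ else 0) t
        = finalU U₀ u := by
    intro u
    rw [compl_iterCover]
    congr 1
    funext i
    simp only [Nat.add_sub_cancel]
    rw [dif_pos i.isLt]
  -- inclusion in the low-good-count event
  have hsub : (Finset.univ.filter (fun u : Fin t → G =>
        iterCover C₀ (fun i => if h : i - 1 < t then u ⟨i - 1, h⟩ else 0) t ≠ Finset.univ))
      ⊆ (Finset.univ.filter (fun u : Fin t → G => goodCount c U₀ u < s)) := by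
    intro u hu
    simp only [Finset.mem_filter, Finset.mem_univ, true_and] at hu ⊢
    by_contra hcon
    apply hu
    have h1 := hiter u
    rw [hcover u hcon] at h1
    exact Finset.univ_subset_iff.mp (Finset.sdiff_eq_empty_iff_subset.mp h1)
  have hcard2 : ((Finset.univ.filter (fun u : Fin t → G =>
        iterCover C₀ (fun i => if h : i - 1 < t then u ⟨i - 1, h⟩ else 0) t ≠ Finset.univ)).card : ℝ)
      ≤ ((Finset.univ.filter (fun u : Fin t → G => goodCount c U₀ u < s)).card : ℝ) := by
    exact_mod_cast Finset.card_le_card hsub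
  have hcount := counting c hc t U₀ s
  -- numeric bound
  set q : ℝ := 1/c + 1/4 with hqdef
  have hqnn : 0 ≤ q := by positivity
  have h4s : (4:ℝ) ^ s ≤ 64 * (n:ℝ) ^ 2 := by
    have h2L : ((2:ℝ)) ^ L ≤ (n:ℝ) := by
      exact_mod_cast Nat.pow_log_le_self 2 (by omega : n ≠ 0)
    have h4L : (4:ℝ) ^ L = ((2:ℝ) ^ L) ^ 2 := by
      rw [← pow_mul, mul_comm, pow_mul]; norm_num
    calc (4:ℝ) ^ s = 64 * (4:ℝ) ^ L := by rw [hsdef, pow_add]; ring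
      _ = 64 * ((2:ℝ) ^ L) ^ 2 := by rw [h4L]
      _ ≤ 64 * (n:ℝ) ^ 2 := by
          apply mul_le_mul_of_nonneg_left _ (by norm_num)
          exact pow_le_pow_left₀ (by positivity) h2L 2
  have hqsmall : q ≤ Real.exp (-(1/24)) := by
    have ha2 : Real.sqrt 2 ^ 2 = 2 := Real.sq_sqrt (by norm_num)
    have ha0 : (0:ℝ) < Real.sqrt 2 := Real.sqrt_pos.mpr (by norm_num)
    have ha : (24/17:ℝ) ≤ Real.sqrt 2 := by nlinarith
    have hcs : Real.sqrt 2 ≤ c := Real.sqrt_le_sqrt hn2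
    have h1c : (1/c:ℝ) ≤ 17/24 := by
      rw [div_le_div_iff₀ hc (by norm_num)]
      nlinarith
    have hexp : (23/24:ℝ) ≤ Real.exp (-(1/24)) := by
      have := Real.add_one_le_exp (-(1/24))
      linarith
    rw [hqdef]
    linarith
  have hqt : q ^ t ≤ ((n:ℝ) ^ 41)⁻¹ := by
    have h1 : q ^ t ≤ Real.exp (-(1/24)) ^ t := pow_le_pow_left₀ hqnn hqsmall t
    have h2 : Real.exp (-(1/24)) ^ t = Real.exp ((t:ℝ) * (-(1/24))) := (Real.exp_nat_mul _ t).symm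
    have hlogn : 0 ≤ Real.log n := Real.log_nonneg hn1
    have h3 : Real.exp ((t:ℝ) * (-(1/24))) ≤ Real.exp (-(41 * Real.log n)) := by
      apply Real.exp_le_exp.mpr
      nlinarith
    have h4 : Real.exp (-(41 * Real.log n)) = ((n:ℝ) ^ 41)⁻¹ := by
      rw [Real.exp_neg]
      congr 1
      have h41 : (41:ℝ) * Real.log n = ((41:ℕ):ℝ) * Real.log n := by norm_num
      rw [h41, Real.exp_nat_mul, Real.exp_log hn0]
    calc q ^ t ≤ Real.exp (-(1/24)) ^ t := h1
      _ = Real.exp ((t:ℝ) * (-(1/24))) := h2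
      _ ≤ Real.exp (-(41 * Real.log n)) := h3
      _ = ((n:ℝ) ^ 41)⁻¹ := h4
  have hmain : (4:ℝ) ^ s * q ^ t ≤ 1/(n:ℝ) ^ 2 := by
    have h37 : (64:ℝ) ≤ (n:ℝ) ^ 37 := by
      calc (64:ℝ) ≤ 2 ^ 37 := by norm_num
        _ ≤ (n:ℝ) ^ 37 := pow_le_pow_left₀ (by norm_num) hn2 37
    have h5 : (4:ℝ) ^ s * q ^ t ≤ (64 * (n:ℝ) ^ 2) * ((n:ℝ) ^ 41)⁻¹ :=
      mul_le_mul h4s hqt (by positivity) (by positivity)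
    have h6 : (64 * (n:ℝ) ^ 2) * ((n:ℝ) ^ 41)⁻¹ ≤ 1/(n:ℝ) ^ 2 := by
      rw [← div_eq_mul_inv, div_le_div_iff₀ (by positivity) (by positivity)]
      calc 64 * (n:ℝ) ^ 2 * (n:ℝ) ^ 2 = 64 * (n:ℝ) ^ 4 := by ring
        _ ≤ (n:ℝ) ^ 37 * (n:ℝ) ^ 4 := by
            apply mul_le_mul_of_nonneg_right h37 (by positivity)
        _ = 1 * (n:ℝ) ^ 41 := by ring
    linarith
  -- final assembly
  have hft : (Fintype.card (Fin t → G) : ℝ) = ((Fintype.card G : ℝ)) ^ t := by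
    rw [Fintype.card_fun, Fintype.card_fin]
    push_cast
    ring
  rw [hft, div_le_iff₀ (by positivity : (0:ℝ) < ((Fintype.card G : ℝ)) ^ t)]
  calc ((Finset.univ.filter (fun u : Fin t → G =>
        iterCover C₀ (fun i => if h : i - 1 < t then u ⟨i - 1, h⟩ else 0) t ≠ Finset.univ)).card : ℝ)
      ≤ ((Finset.univ.filter (fun u : Fin t → G => goodCount c U₀ u < s)).card : ℝ) := hcard2
    _ ≤ 4 ^ s * ((1/c + 1/4) * (Fintype.card G : ℝ)) ^ t := hcount
    _ = (4 ^ s * q ^ t) * ((Fintype.card G : ℝ)) ^ t := by rw [hqdef, mul_pow]; ring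
    _ ≤ (1/(n:ℝ) ^ 2) * ((Fintype.card G : ℝ)) ^ t := by
        apply mul_le_mul_of_nonneg_right hmain (by positivity)
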